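/- Let F be a field of characteristic not 2, K/F a separable quadratic field extension with nontrivial automorphism τ, and suppose μ_m(K) ⊂ F (every m-th root of unity in K lies in F), where the group μ_m(F) of m-th roots of unity in F is cyclic of order m. Set m₀ = m/gcd(2,m) and K¹ = {x ∈ K^× : x τ(x) = 1}. Then K¹ ∩ (K^×)^{m₀} = {±1} · (K¹)^{m₀}, i.e. an element of K¹ is an m₀-th power in K^× if and only if it is ± an m₀-th power of an element of K¹. -/

import Mathlib

/-- `K¹ ∩ (K^×)^{m₀} = {±1}·(K¹)^{m₀}` for a quadratic field extension `K/F` with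
`μ_m(K) ⊆ F` and `μ_m(F)` cyclic of order `m`. -/
theorem stmt_4 (K : Type*) [Field K] (h2 : (2 : K) ≠ 0)
    (τ : K ≃+* K) (hinv : ∀ x, τ (τ x) = x) (hne : ∃ x, τ x ≠ x)
    (m : ℕ) (hm : 1 ≤ m)
    (hμ : ∀ x : K, x ^ m = 1 → τ x = x)
    (ζ : K) (hζfix : τ ζ = ζ) (hζ : IsPrimitiveRoot ζ m) :
    ∀ x : K, x * τ x = 1 →
      ((∃ y : K, y ^ (m / Nat.gcd 2 m) = x) ↔
        ∃ z : K, z * τ z = 1 ∧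
          (x = z ^ (m / Nat.gcd 2 m) ∨ x = -(z ^ (m / Nat.gcd 2 m)))) := by
  haveI : NeZero m := ⟨by omega⟩
  have hζm : ζ ^ m = 1 := hζ.pow_eq_one
  have hζ0 : ζ ≠ 0 := by
    intro h; rw [h, zero_pow (by omega)] at hζm; exact one_ne_zero hζm.symm
  set m₀ := m / Nat.gcd 2 m with hm₀
  have hgm : Nat.gcd 2 m * m₀ = m := Nat.mul_div_cancel' (Nat.gcd_dvd_right 2 m)
  intro x hx
  constructor
  · rintro ⟨y, rfl⟩
    -- N(y)^{m₀} = 1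
    have hN1 : (y * τ y) ^ m₀ = 1 := by
      rw [mul_pow, ← map_pow]; exact hx
    have hNm : (y * τ y) ^ m = 1 := by
      have : (y * τ y) ^ m = ((y * τ y) ^ m₀) ^ Nat.gcd 2 m := by
        rw [← pow_mul, Nat.mul_comm m₀ (Nat.gcd 2 m), hgm]
      rw [this, hN1, one_pow]
    obtain ⟨k, hk, hkeq⟩ := hζ.eq_pow_of_pow_eq_one hNm
    rcases Nat.even_or_odd m with hme | hmo
    · -- m even, m₀ = m/2, gcd = 2
      have hg2 : Nat.gcd 2 m = 2 := Nat.gcd_eq_left (even_iff_two_dvd.mp hme)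
      have h2m : 2 * m₀ = m := by rw [← hgm, hg2]
      have hm₀pos : 0 < m₀ := by omega
      have hζm₀ : ζ ^ m₀ = -1 := by
        have hsq : ζ ^ m₀ * ζ ^ m₀ = 1 := by
          rw [← pow_add]
          have : m₀ + m₀ = m := by omega
          rw [this, hζm]
        rcases mul_self_eq_one_iff.mp hsq with h1 | h1
        · exfalso
          have := hζ.dvd_of_pow_eq_one m₀ h1
          have := Nat.le_of_dvd hm₀pos this
          omega
        · exact h1
      -- k is even
      have hkm : m ∣ k * m₀ := by
        apply hζ.dvd_of_pow_eq_one
        rw [pow_mul, hkeq, hN1]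
      have h2k : 2 ∣ k := by
        obtain ⟨c, hc⟩ := hkm
        have heq : k * m₀ = (2 * c) * m₀ := by
          rw [← h2m] at hc; rw [hc]; ring
        exact ⟨c, Nat.eq_of_mul_eq_mul_right hm₀pos heq⟩
      obtain ⟨j, rfl⟩ := h2k
      set ξ := ζ ^ j with hξdef
      have hξ0 : ξ ≠ 0 := pow_ne_zero _ hζ0
      have hξsq : ξ * ξ = y * τ y := by
        rw [hξdef, ← pow_add, ← hkeq]; ring_nf
      have hτξ : τ ξ = ξ := by rw [hξdef, map_pow, hζfix]
      refine ⟨y * ξ⁻¹, ?_, ?_⟩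
      · rw [map_mul, map_inv₀, hτξ]
        field_simp
        rw [sq]; exact hξsq.symm
      · have hξm₀ : ξ ^ m₀ = (-1) ^ j := by
          rw [hξdef, ← pow_mul, mul_comm j m₀, pow_mul, hζm₀]
        rcases Nat.even_or_odd j with hj | hj
        · left
          rw [mul_pow, inv_pow, hξm₀, hj.neg_one_pow]
          field_simp
        · right
          rw [mul_pow, inv_pow, hξm₀, hj.neg_one_pow]
          field_simp
    · -- m odd, gcd = 1, m₀ = m
      have hg1 : Nat.gcd 2 m = 1 := hmo.coprime_two_left
      have hmm : m₀ = m := by rw [hm₀, hg1, Nat.div_one]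
      set ξ := ζ ^ (k * ((m + 1) / 2)) with hξdef
      have hξ0 : ξ ≠ 0 := pow_ne_zero _ hζ0
      have hτξ : τ ξ = ξ := by rw [hξdef, map_pow, hζfix]
      have hξsq : ξ * ξ = y * τ y := by
        rw [hξdef, ← pow_add, ← hkeq]
        have h1 : k * ((m + 1) / 2) + k * ((m + 1) / 2) = m * k + k := by
          obtain ⟨c, hc⟩ := hmo
          subst hc
          have : (2 * c + 1 + 1) / 2 = c + 1 := by omega
          rw [this]; ring
        rw [h1, pow_add, pow_mul, hζm, one_pow, one_mul]
      have hξm : ξ ^ m₀ = 1 := by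
        rw [hmm, hξdef, ← pow_mul, Nat.mul_comm (k * ((m + 1) / 2)) m, pow_mul, hζm, one_pow]
      refine ⟨y * ξ⁻¹, ?_, Or.inl ?_⟩
      · rw [map_mul, map_inv₀, hτξ]
        field_simp
        rw [sq]; exact hξsq.symm
      · rw [mul_pow, inv_pow, hξm]
        field_simp
  · rintro ⟨z, hz, h | h⟩
    · exact ⟨z, h.symm⟩
    · rcases Nat.even_or_odd m with hme | hmo
      · have hg2 : Nat.gcd 2 m = 2 := Nat.gcd_eq_left (even_iff_two_dvd.mp hme)
        have h2m : 2 * m₀ = m := by rw [← hgm, hg2]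
        have hm₀pos : 0 < m₀ := by omega
        have hζm₀ : ζ ^ m₀ = -1 := by
          have hsq : ζ ^ m₀ * ζ ^ m₀ = 1 := by
            rw [← pow_add]
            have : m₀ + m₀ = m := by omega
            rw [this, hζm]
          rcases mul_self_eq_one_iff.mp hsq with h1 | h1
          · exfalso
            have := hζ.dvd_of_pow_eq_one m₀ h1
            have := Nat.le_of_dvd hm₀pos this
            omega
          · exact h1
        exact ⟨ζ * z, by rw [mul_pow, hζm₀, h]; ring⟩
      · have hg1 : Nat.gcd 2 m = 1 := hmo.coprime_two_left
        have hmm : m₀ = m := by rw [hm₀, hg1, Nat.div_one]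
        refine ⟨-z, ?_⟩
        rw [hmm, hmo.neg_pow, h, ← hmm]
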